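/- Let m_q(x) = b(x)/q with i.i.d. b(x) ~ Bernoulli(q), q∈(0,1], on the grid U. Then for every deterministic field h:U→ℝ, the expected intrinsic energy after masking satisfies exactly 𝔼[𝓔_int(m_q ⊙ h)] = 𝓔_int(h) + ((1−q)/(2q))·Σ_{x∈U} d_x^int · h(x)², where d_x^int = Σ_{y:{x,y}∈E_int} c_{xy} is the intrinsic weighted degree of x. -/

import Mathlib

open MeasureTheory Real

noncomputable section
/-- A point of the `H × W` feature grid `U = {1,…,H} × {1,…,W}` (0-indexed model). -/
abbrev GridPt (H W : ℕ) := Fin H × Fin W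

/-- Embedding of the grid into `ℤ × ℤ` with coordinates in `{1,…,H} × {1,…,W}`. -/
def gridZ {H W : ℕ} (x : GridPt H W) : ℤ × ℤ := ((x.1 : ℤ) + 1, (x.2 : ℤ) + 1)

/-- Nearest-neighbor adjacency on `ℤ × ℤ`: `ℓ¹`-distance one. -/
def adjZ (p q : ℤ × ℤ) : Bool := |p.1 - q.1| + |p.2 - q.2| == 1

/-- The Dirichlet Laplacian matrix on the grid `U` with edge weights `c` and zero
(auxiliary Dirichlet) boundary: `(L_U φ)(x) = ∑_{y : {x,y} ∈ E} c_{xy} (φ(x) − φ̄(y))`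
where `φ̄` extends `φ` by zero outside `U`. -/
def dirichletLap (H W : ℕ) (c : ℤ × ℤ → ℤ × ℤ → ℝ) :
    Matrix (GridPt H W) (GridPt H W) ℝ := fun x y =>
  if x = y then
    ((([((1 : ℤ), (0 : ℤ)), (-1, 0), (0, 1), (0, -1)] : List (ℤ × ℤ)).map
      (fun d => c (gridZ x) (gridZ x + d))).sum)
  else if adjZ (gridZ x) (gridZ y) then -c (gridZ x) (gridZ y) else 0
/-- Intrinsic energy `𝓔_int(f) = (1/2) ∑_{{x,y} ∈ E_int} c_{xy} (f(x) − f(y))²`,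
written as `1/4` times the sum over ordered adjacent pairs in `U`. -/
def Eint {H W : ℕ} (c : ℤ × ℤ → ℤ × ℤ → ℝ) (f : GridPt H W → ℝ) : ℝ :=
  (1 / 4) * ∑ x : GridPt H W, ∑ y : GridPt H W,
    if adjZ (gridZ x) (gridZ y) then c (gridZ x) (gridZ y) * (f x - f y) ^ 2 else 0

/-- Intrinsic weighted degree `d_x^int = ∑_{y : {x,y} ∈ E_int} c_{xy}`. -/
def dInt {H W : ℕ} (c : ℤ × ℤ → ℤ × ℤ → ℝ) (x : GridPt H W) : ℝ :=
  ∑ y : GridPt H W, if adjZ (gridZ x) (gridZ y) then c (gridZ x) (gridZ y) else 0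

/-- Interior (intrinsic) graph Laplacian `L_int` on `U`, with no boundary term. -/
def Lint (H W : ℕ) (c : ℤ × ℤ → ℤ × ℤ → ℝ) :
    Matrix (GridPt H W) (GridPt H W) ℝ := fun x y =>
  if x = y then dInt c x
  else if adjZ (gridZ x) (gridZ y) then -c (gridZ x) (gridZ y) else 0
/-- Inverted-dropout mask `m_q(x) = b(x)/q` built from a Boolean keep pattern `ω`. -/
def maskD {ι : Type*} (q : ℝ) (ω : ι → Bool) (x : ι) : ℝ :=
  (if ω x then (1 : ℝ) else 0) / q

/-- The law of i.i.d. `Bernoulli(q)` keep variables indexed by `ι`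
(the canonical product measure, i.e. i.i.d. coordinates). -/
def bernoulliPi (ι : Type*) [Fintype ι] (q : ℝ) (hq : q ≤ 1) :
    MeasureTheory.Measure (ι → Bool) :=
  MeasureTheory.Measure.pi fun _ =>
    (PMF.bernoulli (Real.toNNReal q) (Real.toNNReal_le_one.mpr hq)).toMeasure

lemma prodint {ι : Type*} [Fintype ι] [DecidableEq ι]
    (μ : Measure Bool) [IsProbabilityMeasure μ] {x y : ι} (hxy : x ≠ y)
    (g g' : Bool → ℝ) :
    ∫ ω : ι → Bool, g (ω x) * g' (ω y) ∂(Measure.pi fun _ => μ)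
      = (∫ b, g b ∂μ) * (∫ b, g' b ∂μ) := by
  letI : MeasureSpace Bool := ⟨μ⟩
  have hvol : (Measure.pi fun _ : ι => μ) = (volume : Measure (ι → Bool)) := rfl
  haveI : IsProbabilityMeasure (volume : Measure Bool) := ‹IsProbabilityMeasure μ›
  set f : ι → Bool → ℝ := fun i => if i = x then g else if i = y then g' else fun _ => 1 with hf
  have key : ∀ ω : ι → Bool, g (ω x) * g' (ω y) = ∏ i, f i (ω i) := by
    intro ω
    rw [← Finset.prod_subset (Finset.subset_univ ({x, y} : Finset ι))
      (by intro i _ hi; simp only [Finset.mem_insert, Finset.mem_singleton, not_or] at hi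
          simp [hf, hi.1, hi.2])]
    rw [Finset.prod_pair hxy]
    simp [hf, hxy, (Ne.symm hxy)]
  simp_rw [key, hvol]
  rw [← hvol, MeasureTheory.integral_fintype_prod_eq_prod f]
  have huniv : ({false, true} : Set Bool) = Set.univ := by ext b; cases b <;> simp
  rw [← Finset.prod_subset (Finset.subset_univ ({x, y} : Finset ι))
      (by intro i _ hi; simp only [Finset.mem_insert, Finset.mem_singleton, not_or] at hi
          simp only [hf, if_neg hi.1, if_neg hi.2]
          rw [MeasureTheory.integral_const]
          simp only [smul_eq_mul, mul_one]
          rw [probReal_univ])]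
  rw [Finset.prod_pair hxy]
  have e1 : f x = g := by simp [hf]
  have e2 : f y = g' := by simp [hf, Ne.symm hxy]
  rw [e1, e2]

lemma bool_int (q : ℝ) (hq0 : 0 < q) (hq1 : q ≤ 1) (g : Bool → ℝ) :
    ∫ b, g b ∂((PMF.bernoulli (Real.toNNReal q) (Real.toNNReal_le_one.mpr hq1)).toMeasure)
      = q * g true + (1 - q) * g false := by
  rw [integral_fintype (Integrable.of_finite)]
  rw [Fintype.sum_bool]
  simp only [Measure.real, PMF.toMeasure_apply_singleton _ _ (measurableSet_singleton _)]
  simp only [PMF.bernoulli_apply, Bool.cond_true, Bool.cond_false, smul_eq_mul]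
  rw [ENNReal.coe_toReal, ENNReal.coe_toReal, NNReal.coe_sub (Real.toNNReal_le_one.mpr hq1),
    Real.coe_toNNReal _ hq0.le, NNReal.coe_one]

lemma pairE {ι : Type*} [Fintype ι] [DecidableEq ι]
    (q : ℝ) (hq0 : 0 < q) (hq1 : q ≤ 1) {x y : ι} (hxy : x ≠ y) (a b : ℝ) :
    ∫ ω, (maskD q ω x * a - maskD q ω y * b) ^ 2 ∂(bernoulliPi ι q hq1)
      = (a - b) ^ 2 + (1 / q - 1) * (a ^ 2 + b ^ 2) := by
  set μb := (PMF.bernoulli (Real.toNNReal q) (Real.toNNReal_le_one.mpr hq1)).toMeasure with hμb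
  haveI : IsProbabilityMeasure (bernoulliPi ι q hq1) := by
    unfold bernoulliPi; infer_instance
  set m : Bool → ℝ := fun u => (if u then (1:ℝ) else 0) / q with hm
  have hbern : bernoulliPi ι q hq1 = Measure.pi fun _ : ι => μb := rfl
  have expand : (fun ω : ι → Bool => (maskD q ω x * a - maskD q ω y * b) ^ 2)
      = fun ω => ((fun u => (m u * a) ^ 2) (ω x) * (fun _ => (1:ℝ)) (ω y)
        - (fun u => 2 * a * m u) (ω x) * (fun v => b * m v) (ω y))
        + (fun _ => (1:ℝ)) (ω x) * (fun v => (m v * b) ^ 2) (ω y) := by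
    funext ω; simp only [maskD, hm]; ring
  rw [expand, integral_add (by exact (Integrable.of_finite).sub Integrable.of_finite)
      Integrable.of_finite,
    integral_sub Integrable.of_finite Integrable.of_finite,
    hbern]
  have h1 := prodint (x := x) (y := y) μb hxy (fun u => (m u * a) ^ 2) (fun _ => (1:ℝ))
  have h2 := prodint (x := x) (y := y) μb hxy (fun u => 2 * a * m u) (fun v => b * m v)
  have h3 := prodint (x := x) (y := y) μb hxy (fun _ => (1:ℝ)) (fun v => (m v * b) ^ 2)
  rw [h1, h2, h3]
  simp only [hμb, bool_int q hq0 hq1]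
  simp only [hm, if_true, if_false, Bool.cond_true, Bool.false_eq_true]
  field_simp
  ring


lemma adjZ_symm (p r : ℤ × ℤ) : adjZ p r = adjZ r p := by
  unfold adjZ
  rw [abs_sub_comm p.1 r.1, abs_sub_comm p.2 r.2]

lemma adj_ne {H W : ℕ} {x y : GridPt H W} (hadj : adjZ (gridZ x) (gridZ y)) : x ≠ y := by
  rintro rfl
  simp [adjZ] at hadj


/-- Exact intrinsic energy inflation under inverted dropout: for every
deterministic field `h`,
`𝔼[𝓔_int(m_q ⊙ h)] = 𝓔_int(h) + ((1−q)/(2q)) ∑_x d_x^int h(x)²`. -/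
theorem dropout_intrinsic_energy_inflation {H W : ℕ}
    (c : ℤ × ℤ → ℤ × ℤ → ℝ)
    (hsym : ∀ p q : ℤ × ℤ, c p q = c q p)
    (hpos : ∀ p q : ℤ × ℤ, adjZ p q → 0 < c p q)
    (q : ℝ) (hq0 : 0 < q) (hq1 : q ≤ 1) (h : GridPt H W → ℝ) :
    (∫ ω, Eint c (fun x => maskD q ω x * h x) ∂(bernoulliPi (GridPt H W) q hq1)) =
      Eint c h + ((1 - q) / (2 * q)) * ∑ x : GridPt H W, dInt c x * (h x) ^ 2 := by
  haveI : IsProbabilityMeasure (bernoulliPi (GridPt H W) q hq1) := by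
    unfold bernoulliPi; infer_instance
  unfold Eint
  rw [integral_const_mul]
  rw [integral_finset_sum _ (fun i _ => Integrable.of_finite)]
  have step : ∀ x : GridPt H W,
      (∫ ω, ∑ y : GridPt H W, (if adjZ (gridZ x) (gridZ y) then
          c (gridZ x) (gridZ y) * (maskD q ω x * h x - maskD q ω y * h y) ^ 2 else 0)
        ∂(bernoulliPi (GridPt H W) q hq1))
      = ∑ y : GridPt H W, (if adjZ (gridZ x) (gridZ y) then
          c (gridZ x) (gridZ y) *
            ((h x - h y) ^ 2 + (1 / q - 1) * ((h x) ^ 2 + (h y) ^ 2)) else 0) := by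
    intro x
    rw [integral_finset_sum _ (fun i _ => Integrable.of_finite)]
    refine Finset.sum_congr rfl fun y _ => ?_
    by_cases hadj : adjZ (gridZ x) (gridZ y)
    · simp only [if_pos hadj]
      rw [integral_const_mul, pairE q hq0 hq1 (adj_ne hadj)]
    · simp [hadj]
  simp only [step]
  -- now pure algebra
  have split : ∀ x y : GridPt H W,
      (if adjZ (gridZ x) (gridZ y) then
          c (gridZ x) (gridZ y) *
            ((h x - h y) ^ 2 + (1 / q - 1) * ((h x) ^ 2 + (h y) ^ 2)) else 0)
      = (if adjZ (gridZ x) (gridZ y) then c (gridZ x) (gridZ y) * (h x - h y) ^ 2 else 0)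
        + (1 / q - 1) * ((if adjZ (gridZ x) (gridZ y) then c (gridZ x) (gridZ y) else 0) * (h x) ^ 2)
        + (1 / q - 1) * ((if adjZ (gridZ x) (gridZ y) then c (gridZ x) (gridZ y) else 0) * (h y) ^ 2) := by
    intro x y
    by_cases hadj : adjZ (gridZ x) (gridZ y) <;> simp [hadj] <;> ring
  simp only [split, Finset.sum_add_distrib, ← Finset.mul_sum]
  have e1 : ∀ x : GridPt H W,
      (∑ y : GridPt H W, (if adjZ (gridZ x) (gridZ y) then c (gridZ x) (gridZ y) else 0) * (h x) ^ 2)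
      = dInt c x * (h x) ^ 2 := by
    intro x; rw [← Finset.sum_mul]; rfl
  have e2 : (∑ x : GridPt H W, ∑ y : GridPt H W,
        (if adjZ (gridZ x) (gridZ y) then c (gridZ x) (gridZ y) else 0) * (h y) ^ 2)
      = ∑ x : GridPt H W, dInt c x * (h x) ^ 2 := by
    rw [Finset.sum_comm]
    refine Finset.sum_congr rfl fun y _ => ?_
    rw [← Finset.sum_mul]
    congr 1
    refine Finset.sum_congr rfl fun x _ => ?_
    rw [adjZ_symm, hsym]
  simp only [e1, e2]
  field_simp
  ring

end
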